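/- Let H be a β-acyclic hypergraph with β-elimination order < and edge order <_H. For every vertex x, edge e, and edge f ∈ H_e^x, there exists a decreasing path from e to f going through vertices ≤ x, i.e., a path (e = e_0, x_0, e_1, ..., x_{n-1}, e_n = f) with e_0 >_H e_1 >_H ... >_H e_n, x_0 > x_1 > ... > x_{n-1}, and each x_i ≤ x. -/

import Mathlib

variable {V : Type*} [LinearOrder V]

/-- The colexicographic order on edges: `e <_H f` iff `max (e Δ f) ∈ f`. -/
def edgeLT (e f : Finset V) : Prop :=
  ∃ hne : (symmDiff e f).Nonempty, (symmDiff e f).max' hne ∈ f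

def edgeLE (e f : Finset V) : Prop := e = f ∨ edgeLT e f

/-- The linear order on `V` is a β-elimination order for the hypergraph `H`. -/
def IsBetaElim (H : Finset (Finset V)) : Prop :=
  ∀ x : V, ∀ e ∈ H, ∀ f ∈ H, x ∈ e → x ∈ f →
    (e.filter fun y => x < y) ⊆ f ∨ (f.filter fun y => x < y) ⊆ e

/-- A walk starting at edge `e` and continuing through the vertex/edge pairs in `p`. -/
def WalkAux (H : Finset (Finset V)) : Finset V → List (V × Finset V) → Prop
  | _, [] => True
  | e, (x, f) :: p => x ∈ e ∧ x ∈ f ∧ f ∈ H ∧ WalkAux H f p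

def lastEdge (e : Finset V) (p : List (V × Finset V)) : Finset V :=
  (p.map Prod.snd).getLastD e

/-- `p` is a walk from edge `e` to edge `f` in `H`. -/
def IsWalk (H : Finset (Finset V)) (e f : Finset V) (p : List (V × Finset V)) : Prop :=
  e ∈ H ∧ WalkAux H e p ∧ lastEdge e p = f

/-- A path: a walk with pairwise distinct edges and pairwise distinct vertices. -/
def IsPath (H : Finset (Finset V)) (e f : Finset V) (p : List (V × Finset V)) : Prop :=
  IsWalk H e f p ∧ (e :: p.map Prod.snd).Nodup ∧ (p.map Prod.fst).Nodup

/-- `f ∈ H_e^x`: there is a walk from `f` to `e` using only edges `≤_H e` and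
vertices `≤ x`. -/
def memHex (H : Finset (Finset V)) (e : Finset V) (x : V) (f : Finset V) : Prop :=
  ∃ p, IsWalk H f e p ∧ edgeLE f e ∧ ∀ q ∈ p, edgeLE q.2 e ∧ q.1 ≤ x

lemma edgeLT_iff {e f : Finset V} :
    edgeLT e f ↔ ∃ m, m ∈ f ∧ m ∉ e ∧ ∀ z, m < z → (z ∈ e ↔ z ∈ f) := by
  constructor
  · rintro ⟨hne, hmem⟩
    refine ⟨(symmDiff e f).max' hne, hmem, ?_, ?_⟩
    · have h := (symmDiff e f).max'_mem hne
      rw [Finset.mem_symmDiff] at h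
      tauto
    · intro z hz
      have hz' : z ∉ symmDiff e f := fun hzz =>
        absurd ((symmDiff e f).le_max' z hzz) (not_le.2 hz)
      rw [Finset.mem_symmDiff] at hz'
      tauto
  · rintro ⟨m, hmf, hme, hagree⟩
    have hm : m ∈ symmDiff e f := Finset.mem_symmDiff.2 (Or.inr ⟨hmf, hme⟩)
    have hne : (symmDiff e f).Nonempty := ⟨m, hm⟩
    refine ⟨hne, ?_⟩
    have hM := (symmDiff e f).max'_mem hne
    have hle := (symmDiff e f).le_max' m hm
    rcases lt_or_eq_of_le hle with h | h
    · exfalso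
      have := hagree _ h
      rw [Finset.mem_symmDiff] at hM
      tauto
    · rw [← h]; exact hmf

lemma edgeLT_trans {e f g : Finset V} (h1 : edgeLT e f) (h2 : edgeLT f g) : edgeLT e g := by
  rw [edgeLT_iff] at *
  obtain ⟨m1, hm1f, hm1e, ha1⟩ := h1
  obtain ⟨m2, hm2g, hm2f, ha2⟩ := h2
  rcases lt_trichotomy m1 m2 with h | h | h
  · exact ⟨m2, hm2g, fun hc => hm2f ((ha1 _ h).1 hc),
      fun z hz => (ha1 z (h.trans hz)).trans (ha2 z hz)⟩
  · exact absurd hm1f (h ▸ hm2f)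
  · exact ⟨m1, (ha2 _ h).1 hm1f, hm1e, fun z hz => (ha1 z hz).trans (ha2 z (h.trans hz))⟩

lemma edgeLT_irrefl (e : Finset V) : ¬ edgeLT e e := by
  rintro ⟨hne, -⟩
  simp [symmDiff_self] at hne

lemma edgeLT_total {e f : Finset V} (h : e ≠ f) : edgeLT e f ∨ edgeLT f e := by
  have hne : (symmDiff e f).Nonempty := by
    rw [Finset.nonempty_iff_ne_empty]
    intro hc
    exact h (symmDiff_eq_bot.1 (by simpa using hc))
  set m := (symmDiff e f).max' hne with hm
  have hmem := (symmDiff e f).max'_mem hne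
  have hagree : ∀ z, m < z → (z ∈ e ↔ z ∈ f) := by
    intro z hz
    have hz' : z ∉ symmDiff e f := fun hzz =>
      absurd ((symmDiff e f).le_max' z hzz) (not_le.2 hz)
    rw [Finset.mem_symmDiff] at hz'
    tauto
  rw [Finset.mem_symmDiff] at hmem
  rcases hmem with ⟨hme, hmf⟩ | ⟨hmf, hme⟩
  · exact Or.inr (edgeLT_iff.2 ⟨m, hme, hmf, fun z hz => (hagree z hz).symm⟩)
  · exact Or.inl (edgeLT_iff.2 ⟨m, hmf, hme, hagree⟩)

lemma elim_filter_subset {H : Finset (Finset V)} (hβ : IsBetaElim H) {y : V} {e f : Finset V}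
    (he : e ∈ H) (hf : f ∈ H) (hye : y ∈ e) (hyf : y ∈ f) (hef : edgeLE e f) :
    e.filter (fun z => y < z) ⊆ f := by
  rcases hef with rfl | hef
  · exact Finset.filter_subset _ _
  rcases hβ y e he f hf hye hyf with h | h
  · exact h
  · intro z hz
    rw [Finset.mem_filter] at hz
    obtain ⟨hze, hyz⟩ := hz
    by_contra hzf
    obtain ⟨m, hmf, hme, hagree⟩ := edgeLT_iff.1 hef
    have hzm : z < m := by
      rcases lt_trichotomy z m with h' | h' | h'
      · exact h'
      · exact absurd (h' ▸ hze) hme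
      · exact absurd ((hagree z h').1 hze) hzf
    exact hme (h (Finset.mem_filter.2 ⟨hmf, hyz.trans hzm⟩))

lemma lastEdge_nil (e : Finset V) : lastEdge e ([] : List (V × Finset V)) = e := rfl

lemma lastEdge_cons (e : Finset V) (y : V) (h : Finset V) (p : List (V × Finset V)) :
    lastEdge e ((y, h) :: p) = lastEdge h p := by
  rw [lastEdge, List.map_cons, List.getLastD_cons]; rfl

lemma lastEdge_concat (e : Finset V) (p : List (V × Finset V)) (y : V) (g : Finset V) :
    lastEdge e (p ++ [(y, g)]) = g := by
  simp [lastEdge, List.getLastD_concat]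

lemma getLast?_cons_eq {α : Type*} (e : α) (l : List α) :
    (e :: l).getLast? = some (l.getLastD e) := by
  induction l generalizing e with
  | nil => rfl
  | cons a l ih => rw [List.getLast?_cons_cons, ih a, List.getLastD_cons]

lemma walkAux_concat {H : Finset (Finset V)} (e : Finset V) (p : List (V × Finset V)) (y : V)
    (g : Finset V) :
    WalkAux H e (p ++ [(y, g)]) ↔ WalkAux H e p ∧ y ∈ lastEdge e p ∧ y ∈ g ∧ g ∈ H := by
  induction p generalizing e with
  | nil => simp [WalkAux, lastEdge_nil]
  | cons a p ih =>
    obtain ⟨z, h⟩ := a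
    have hcons : ∀ e' q, WalkAux H e' ((z, h) :: q) ↔
        (z ∈ e' ∧ z ∈ h ∧ h ∈ H ∧ WalkAux H h q) := fun _ _ => Iff.rfl
    rw [List.cons_append, hcons, hcons, ih h, lastEdge_cons]
    tauto

lemma lastEdge_mem {H : Finset (Finset V)} {e : Finset V} {p : List (V × Finset V)}
    (he : e ∈ H) (hw : WalkAux H e p) : lastEdge e p ∈ H := by
  induction p generalizing e with
  | nil => exact he
  | cons a p ih =>
    obtain ⟨z, h⟩ := a
    obtain ⟨-, -, hh, hw'⟩ := hw
    rw [lastEdge_cons]; exact ih hh hw'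

def Good (H : Finset (Finset V)) (e : Finset V) (x : V) (p : List (V × Finset V)) : Prop :=
  WalkAux H e p ∧ List.Chain' (fun a b => edgeLT b a) (e :: p.map Prod.snd) ∧
    List.Chain' (fun a b => b < a) (p.map Prod.fst) ∧ ∀ q ∈ p, q.1 ≤ x

lemma good_drop {H : Finset (Finset V)} {e : Finset V} {x : V} {p : List (V × Finset V)}
    {xk : V} {g : Finset V} (h : Good H e x (p ++ [(xk, g)])) :
    Good H e x p ∧ xk ∈ lastEdge e p ∧ xk ∈ g ∧ g ∈ H ∧ edgeLT g (lastEdge e p) ∧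
      xk ≤ x ∧ (∀ z ∈ (p.map Prod.fst).getLast?, xk < z) := by
  obtain ⟨hw, hce, hcv, hbd⟩ := h
  rw [walkAux_concat] at hw
  obtain ⟨hw', hxkl, hxkg, hgH⟩ := hw
  rw [List.map_append] at hce hcv
  rw [show e :: (p.map Prod.snd ++ [(xk, g)].map Prod.snd) =
      (e :: p.map Prod.snd) ++ [g] by simp] at hce
  rw [List.Chain', List.isChain_append] at hce hcv
  obtain ⟨hce1, -, hce3⟩ := hce
  obtain ⟨hcv1, -, hcv3⟩ := hcv
  refine ⟨⟨hw', hce1, hcv1, fun q hq => hbd q (by simp [hq])⟩, hxkl, hxkg, hgH, ?_, ?_, ?_⟩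
  · exact hce3 _ (by rw [getLast?_cons_eq]; rfl) g rfl
  · exact hbd (xk, g) (by simp)
  · intro z hz
    exact hcv3 z hz xk rfl

lemma good_extend {H : Finset (Finset V)} {e : Finset V} {x : V} {p : List (V × Finset V)}
    {y : V} {f : Finset V} (hg : Good H e x p) (hyl : y ∈ lastEdge e p) (hyf : y ∈ f)
    (hfH : f ∈ H) (hyx : y ≤ x) (hflt : edgeLT f (lastEdge e p))
    (hylt : ∀ z ∈ (p.map Prod.fst).getLast?, y < z) :
    Good H e x (p ++ [(y, f)]) := by
  obtain ⟨hw, hce, hcv, hbd⟩ := hg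
  refine ⟨(walkAux_concat e p y f).2 ⟨hw, hyl, hyf, hfH⟩, ?_, ?_, ?_⟩
  · rw [List.map_append, show e :: (p.map Prod.snd ++ [(y, f)].map Prod.snd) =
      (e :: p.map Prod.snd) ++ [f] by simp, List.Chain', List.isChain_append]
    refine ⟨hce, List.isChain_singleton f, ?_⟩
    intro a ha b hb
    rw [getLast?_cons_eq, Option.mem_def, Option.some_inj] at ha
    rw [List.head?_cons, Option.mem_def, Option.some_inj] at hb
    subst ha; subst hb
    exact hflt
  · rw [List.map_append, List.Chain', List.isChain_append]
    exact ⟨hcv, by simp, fun a ha b hb => by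
      obtain rfl : y = b := by simpa using hb
      exact hylt a ha⟩
  · intro q hq
    rcases List.mem_append.1 hq with h | h
    · exact hbd q h
    · obtain rfl : q = (y, f) := by simpa using h
      exact hyx

lemma lemB {H : Finset (Finset V)} (hβ : IsBetaElim H) {e : Finset V} (he : e ∈ H) (x : V)
    (p : List (V × Finset V)) :
    Good H e x p → ∀ f y, f ∈ H → y ∈ lastEdge e p → y ∈ f → y ≤ x → edgeLE f e →
      ∃ q, Good H e x q ∧ lastEdge e q = f := by
  induction p using List.reverseRecOn with
  | nil =>
    intro hgood f y hfH hyl hyf hyx hfe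
    rcases hfe with rfl | hfe
    · exact ⟨[], hgood, rfl⟩
    · exact ⟨[(y, f)], good_extend (p := []) hgood hyl hyf hfH hyx hfe (by simp),
        by simp [lastEdge]⟩
  | append_singleton p a ih =>
    intro hgood f y hfH hyl hyf hyx hfe
    obtain ⟨xk, g⟩ := a
    obtain ⟨hgp, hxkl, hxkg, hgH, hglt, hxkx, hxklast⟩ := good_drop hgood
    rw [lastEdge_concat] at hyl
    have hg'H : lastEdge e p ∈ H := lastEdge_mem he hgp.1
    by_cases hfg : f = g
    · subst hfg
      exact ⟨p ++ [(xk, f)], hgood, lastEdge_concat e p xk f⟩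
    rcases le_or_gt xk y with hxy | hxy
    · -- y ≥ xk : y is in lastEdge e p
      have hyg' : y ∈ lastEdge e p := by
        rcases eq_or_lt_of_le hxy with h | h
        · exact h ▸ hxkl
        · exact elim_filter_subset hβ hgH hg'H hxkg hxkl (Or.inr hglt)
            (Finset.mem_filter.2 ⟨hyl, h⟩)
      exact ih hgp f y hfH hyg' hyf hyx hfe
    · rcases edgeLT_total hfg with hflt | hglt2
      · -- f <_H g : extend the path
        refine ⟨(p ++ [(xk, g)]) ++ [(y, f)],
          good_extend hgood (by rw [lastEdge_concat]; exact hyl) hyf hfH hyx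
            (by rw [lastEdge_concat]; exact hflt) ?_, lastEdge_concat ..⟩
        intro z hz
        rw [List.map_append, List.map_cons, List.map_nil, List.getLast?_concat] at hz
        obtain rfl : xk = z := by simpa using hz
        exact hxy
      · -- g <_H f : xk ∈ f, recurse
        have hxkf : xk ∈ f := elim_filter_subset hβ hgH hfH hyl hyf (Or.inr hglt2)
          (Finset.mem_filter.2 ⟨hxkg, hxy⟩)
        exact ih hgp f xk hfH hxkl hxkf hxkx hfe

lemma lemC {H : Finset (Finset V)} (hβ : IsBetaElim H) {e : Finset V} (he : e ∈ H) (x : V)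
    (p : List (V × Finset V)) : ∀ f : Finset V, IsWalk H f e p → edgeLE f e →
      (∀ q ∈ p, edgeLE q.2 e ∧ q.1 ≤ x) → ∃ q, Good H e x q ∧ lastEdge e q = f := by
  induction p with
  | nil =>
    intro f hw _ _
    obtain ⟨-, -, rfl⟩ := hw
    exact ⟨[], ⟨trivial, by simp [List.Chain'], by simp [List.Chain'], by simp⟩, rfl⟩
  | cons a p ih =>
    obtain ⟨y, h⟩ := a
    intro f hw hfe hq
    obtain ⟨hfH, hwa, hlast⟩ := hw
    obtain ⟨hyf, hyh, hhH, hwa'⟩ := hwa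
    rw [lastEdge_cons] at hlast
    obtain ⟨hhe, hyx⟩ := hq (y, h) (by simp)
    obtain ⟨q, hgq, hlq⟩ := ih h ⟨hhH, hwa', hlast⟩ hhe fun r hr => hq r (by simp [hr])
    exact lemB hβ he x q hgq f y hfH (hlq ▸ hyh) hyf hyx hfe

lemma chain'_edges_nodup {l : List (Finset V)}
    (h : List.Chain' (fun a b => edgeLT b a) l) : l.Nodup := by
  haveI : IsTrans (Finset V) (fun a b => edgeLT b a) :=
    ⟨fun _ _ _ h1 h2 => edgeLT_trans h2 h1⟩
  exact (List.isChain_iff_pairwise.1 h).imp fun {a b} hab => by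
    rintro rfl; exact edgeLT_irrefl _ hab

lemma chain'_verts_nodup {l : List V}
    (h : List.Chain' (fun a b => b < a) l) : l.Nodup := by
  haveI : IsTrans V (fun a b => b < a) := ⟨fun _ _ _ h1 h2 => h2.trans h1⟩
  exact (List.isChain_iff_pairwise.1 h).imp fun {a b} hab => hab.ne'

theorem exists_decreasing_path {V : Type*} [LinearOrder V] (H : Finset (Finset V))
    (hβ : IsBetaElim H) (e : Finset V) (he : e ∈ H) (x : V) (f : Finset V)
    (hf : memHex H e x f) :
    ∃ p, IsPath H e f p ∧
      List.Chain' (fun a b => edgeLT b a) (e :: p.map Prod.snd) ∧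
      List.Chain' (fun a b => b < a) (p.map Prod.fst) ∧
      ∀ q ∈ p, q.1 ≤ x := by
  obtain ⟨p0, hw, hfe, hq⟩ := hf
  obtain ⟨q, ⟨hwq, hce, hcv, hbd⟩, hlq⟩ := lemC hβ he x p0 f hw hfe hq
  exact ⟨q, ⟨⟨he, hwq, hlq⟩, chain'_edges_nodup hce, chain'_verts_nodup hcv⟩, hce, hcv, hbd⟩
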